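/- Let G = (V, E) be a finite simple graph and let σ = v_1, …, v_n be an ordering of V. For each i with 1 ≤ i ≤ n and each vertex x, let label_i(x) denote the strictly decreasing list of all indices j < i such that v_j x ∈ E. Then σ is a LexDFS ordering of G — that is, for every i with 1 ≤ i ≤ n and every k with i < k ≤ n, label_i(v_k) is less than or equal to label_i(v_i) in the lexicographic order on lists of natural numbers (entries compared by the usual order on ℕ, a proper prefix being smaller than any list extending it) — if and only if σ satisfies the LexDFS 4-point condition. -/

import Mathlib

/-- The LexDFS 4-point condition for the ordering `σ` of `G`. -/
def FourPointLexDFS {V : Type*} {n : ℕ} (G : SimpleGraph V) (σ : Fin n ≃ V) : Prop :=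
  ∀ i j k : Fin n, i < j → j < k → G.Adj (σ i) (σ k) → ¬ G.Adj (σ i) (σ j) →
    ∃ d : Fin n, i < d ∧ d < j ∧ G.Adj (σ d) (σ j) ∧ ¬ G.Adj (σ d) (σ k)

/-- `lexLabel G σ i x` is the LexDFS label of the vertex `x` just before step `i` of the
search along `σ`: the strictly decreasing list of all indices `j < i` such that
`v_j x ∈ E` (indices of already-visited neighbours of `x`, largest first). -/
def lexLabel {V : Type*} {n : ℕ} (G : SimpleGraph V) [DecidableRel G.Adj]
    (σ : Fin n ≃ V) (i : Fin n) (x : V) : List ℕ :=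
  (((List.finRange n).filter (fun j => decide (j < i ∧ G.Adj (σ j) x))).map Fin.val).reverse

namespace LexDFSAux

variable {V : Type*} {n : ℕ} (G : SimpleGraph V) [DecidableRel G.Adj] (σ : Fin n ≃ V)

/-- `labQ G σ x a` : index `a` is valid and `v_a` is adjacent to `x`. -/
def labQ (x : V) (a : ℕ) : Prop := ∃ h : a < n, G.Adj (σ ⟨a, h⟩) x

instance (x : V) (a : ℕ) : Decidable (labQ G σ x a) := exists_prop_decidable _

/-- recursive form of the label, with explicit natural-number bound. -/
def lab (x : V) : ℕ → List ℕ
  | 0 => []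
  | m + 1 => if labQ G σ x m then m :: lab x m else lab x m

lemma lab_mem_lt (x : V) : ∀ m, ∀ a ∈ lab G σ x m, a < m := by
  intro m
  induction m with
  | zero => simp [lab]
  | succ m ih =>
    intro a ha
    rw [lab] at ha
    split at ha
    · rcases List.mem_cons.1 ha with rfl | ha
      · omega
      · exact (ih a ha).trans (Nat.lt_succ_self m)
    · exact (ih a ha).trans (Nat.lt_succ_self m)

lemma filter_range_eq_lab (x : V) : ∀ m, m ≤ n →
    ((List.range m).filter (fun a => decide (labQ G σ x a))).reverse = lab G σ x m := by
  intro m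
  induction m with
  | zero => simp [lab]
  | succ m ih =>
    intro hm
    rw [List.range_succ, List.filter_append, List.reverse_append, lab,
      ih (Nat.le_of_succ_le hm)]
    by_cases h : labQ G σ x m <;> simp [h]

lemma lexLabel_eq_lab (i : Fin n) (x : V) : lexLabel G σ i x = lab G σ x i.val := by
  unfold lexLabel
  have h1 : ((List.finRange n).filter (fun j => decide (j < i ∧ G.Adj (σ j) x)))
      = ((List.finRange n).filter (fun j : Fin n => decide ((j : ℕ) < (i : ℕ) ∧ labQ G σ x (j : ℕ)))) := by
    apply List.filter_congr
    intro j _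
    simp only [decide_eq_decide]
    constructor
    · rintro ⟨h1, h2⟩; exact ⟨h1, j.isLt, h2⟩
    · rintro ⟨h1, _, h2⟩; exact ⟨h1, h2⟩
  rw [h1]
  have h2 : ((List.finRange n).filter
        (fun j : Fin n => decide ((j : ℕ) < (i : ℕ) ∧ labQ G σ x (j : ℕ)))).map Fin.val
      = (List.range n).filter (fun a => decide (a < (i : ℕ) ∧ labQ G σ x a)) := by
    rw [← List.map_coe_finRange_eq_range, List.filter_map]
    rfl
  rw [h2]
  have h3 : (List.range n).filter (fun a => decide (a < (i : ℕ) ∧ labQ G σ x a))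
      = (List.range (i : ℕ)).filter (fun a => decide (labQ G σ x a)) := by
    obtain ⟨k, hk⟩ : ∃ k, n = (i : ℕ) + k := ⟨n - i, by omega⟩
    rw [show List.range n = List.range ((i : ℕ) + k) from congrArg _ hk,
      List.range_add, List.filter_append]
    have : (((List.range k).map (fun j => (i : ℕ) + j)).filter
        (fun a => decide (a < (i : ℕ) ∧ labQ G σ x a))) = [] := by
      rw [List.filter_eq_nil_iff]
      intro a ha
      simp only [List.mem_map, List.mem_range] at ha
      obtain ⟨b, _, rfl⟩ := ha
      simp only [decide_eq_true_eq, not_and]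
      omega
    rw [this, List.append_nil]
    apply List.filter_congr
    intro a ha
    simp only [List.mem_range] at ha
    simp [ha]
  rw [h3, filter_range_eq_lab G σ x (i : ℕ) (Nat.le_of_lt i.isLt)]

/-- The key characterisation of the lexicographic comparison of labels. -/
lemma key (x y : V) : ∀ m : ℕ,
    (lab G σ x m = lab G σ y m ∨ List.Lex (· < ·) (lab G σ x m) (lab G σ y m)) ↔
    (∀ a : ℕ, a < m → labQ G σ x a → ¬ labQ G σ y a →
      ∃ d, a < d ∧ d < m ∧ labQ G σ y d ∧ ¬ labQ G σ x d) := by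
  intro m
  induction m with
  | zero => simp [lab]
  | succ m ih =>
    rw [lab, lab]
    by_cases hx : labQ G σ x m <;> by_cases hy : labQ G σ y m <;>
      simp only [hx, hy, if_true, if_false]
    · -- both adjacent
      rw [List.cons_eq_cons, List.lex_cons_iff]
      constructor
      · rintro (⟨-, h⟩ | h) <;> intro a ha hax hay
        · have ham : a ≠ m := fun h' => hay (h' ▸ hy)
          obtain ⟨d, hd1, hd2, hd3, hd4⟩ := (ih.mp (Or.inl h)) a (by omega) hax hay
          exact ⟨d, hd1, by omega, hd3, hd4⟩
        · have ham : a ≠ m := fun h' => hay (h' ▸ hy)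
          obtain ⟨d, hd1, hd2, hd3, hd4⟩ := (ih.mp (Or.inr h)) a (by omega) hax hay
          exact ⟨d, hd1, by omega, hd3, hd4⟩
      · intro h
        have : ∀ a : ℕ, a < m → labQ G σ x a → ¬ labQ G σ y a →
            ∃ d, a < d ∧ d < m ∧ labQ G σ y d ∧ ¬ labQ G σ x d := by
          intro a ha hax hay
          obtain ⟨d, hd1, hd2, hd3, hd4⟩ := h a (by omega) hax hay
          have : d ≠ m := fun h' => hd4 (h' ▸ hx)
          exact ⟨d, hd1, by omega, hd3, hd4⟩
        rcases ih.mpr this with h' | h'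
        · exact Or.inl ⟨rfl, h'⟩
        · exact Or.inr h'
    · -- x adjacent at m, y not : both sides false
      constructor
      · rintro (h | h)
        · exfalso
          have : m ∈ lab G σ y m := h ▸ List.mem_cons_self
          exact absurd (lab_mem_lt G σ y m m this) (lt_irrefl m)
        · exfalso
          rcases hY : lab G σ y m with _ | ⟨b, M⟩ <;> rw [hY] at h
          · exact List.not_lex_nil h
          · have hb : b < m := lab_mem_lt G σ y m b (hY ▸ List.mem_cons_self)
            cases h with
            | cons h' => exact absurd hb (lt_irrefl m)
            | rel h' => omega
      · intro h
        exfalso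
        obtain ⟨d, hd1, hd2, -, -⟩ := h m (Nat.lt_succ_self m) hx hy
        omega
    · -- y adjacent at m, x not : both sides true
      constructor
      · intro _ a ha hax hay
        have ham : a ≠ m := fun h' => hx (h' ▸ hax)
        exact ⟨m, by omega, Nat.lt_succ_self m, hy, hx⟩
      · intro _
        right
        rcases h : lab G σ x m with _ | ⟨b, L⟩
        · exact List.Lex.nil
        · refine List.Lex.rel ?_
          have : b ∈ lab G σ x m := h ▸ List.mem_cons_self
          exact lab_mem_lt G σ x m b this
    · -- neither adjacent at m
      rw [ih]
      constructor
      · intro h a ha hax hay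
        have ham : a ≠ m := fun h' => hx (h' ▸ hax)
        obtain ⟨d, hd1, hd2, hd3, hd4⟩ := h a (by omega) hax hay
        exact ⟨d, hd1, by omega, hd3, hd4⟩
      · intro h a ha hax hay
        obtain ⟨d, hd1, hd2, hd3, hd4⟩ := h a (by omega) hax hay
        have : d ≠ m := fun h' => hy (h' ▸ hd3)
        exact ⟨d, hd1, by omega, hd3, hd4⟩

end LexDFSAux

/-- An ordering `σ` of a finite graph `G` is a LexDFS ordering (at each step `i` the
vertex `v_i` has lexicographically maximal label among the unvisited vertices, where a
proper prefix is smaller than any of its extensions) if and only if `σ` satisfies the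
LexDFS 4-point condition. -/
theorem lexdfs_label_iff_four_point {V : Type*} [Fintype V] (G : SimpleGraph V)
    [DecidableRel G.Adj] {n : ℕ} (σ : Fin n ≃ V) :
    (∀ i k : Fin n, i < k →
        lexLabel G σ i (σ k) = lexLabel G σ i (σ i) ∨
          List.Lex (· < ·) (lexLabel G σ i (σ k)) (lexLabel G σ i (σ i))) ↔
      FourPointLexDFS G σ := by
  constructor
  · intro h i j k hij hjk hik hnij
    have hk := h j k hjk
    rw [LexDFSAux.lexLabel_eq_lab, LexDFSAux.lexLabel_eq_lab] at hk
    have hprop := (LexDFSAux.key G σ (σ k) (σ j) j.val).mp hk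
    obtain ⟨d, hd1, hd2, ⟨hdn, hdj⟩, hdk⟩ :=
      hprop i.val hij ⟨i.isLt, hik⟩ (fun hq => hq.elim (fun _ h' => hnij h'))
    exact ⟨⟨d, hdn⟩, hd1, hd2, hdj, fun hadj => hdk ⟨hdn, hadj⟩⟩
  · intro h i k hik
    rw [LexDFSAux.lexLabel_eq_lab, LexDFSAux.lexLabel_eq_lab]
    apply (LexDFSAux.key G σ (σ k) (σ i) i.val).mpr
    rintro a ha ⟨han, hax⟩ hay
    obtain ⟨d, hd1, hd2, hd3, hd4⟩ :=
      h ⟨a, han⟩ i k ha hik hax (fun hadj => hay ⟨han, hadj⟩)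
    exact ⟨d.val, hd1, hd2, ⟨d.isLt, hd3⟩, fun hq => hq.elim (fun _ h' => hd4 h')⟩
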